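/- Under the hypotheses of the norm-preserving nonlinear Schrödinger ODE dx_t/dt = [-iH₀ - (1/2)C*C + (1/2)η_t]x_t with η_t = ⟨x_t, C*C x_t⟩ and ‖x₀‖=1, the family of rank-one projectors ρ_t = P_{x_t} satisfies the matrix ODE dρ_t/dt = L(ρ_t) + Tr[J(ρ_t)]ρ_t − J(ρ_t), where L(ρ) = −i[H₀,ρ] − (1/2){C*C, ρ} + CρC* and J(ρ) = CρC*. -/

import Mathlib

open Matrix

/-- The Lindblad generator `L(ρ) = -i[H₀,ρ] - (1/2){C*C,ρ} + CρC*`. -/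
noncomputable def lindblad (H₀ C ρ : Matrix (Fin 2) (Fin 2) ℂ) : Matrix (Fin 2) (Fin 2) ℂ :=
  (-Complex.I) • (H₀ * ρ - ρ * H₀) - (1/2 : ℂ) • (Cᴴ * C * ρ + ρ * (Cᴴ * C)) + C * ρ * Cᴴ

/-- `J(ρ) = CρC*`. -/
noncomputable def jmap (C ρ : Matrix (Fin 2) (Fin 2) ℂ) : Matrix (Fin 2) (Fin 2) ℂ := C * ρ * Cᴴ

set_option maxHeartbeats 1000000 in
/-- If `x_t` solves the norm-preserving nonlinear Schrödinger ODE, then the rank-one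
projectors `ρ_t = P_{x_t}` solve `dρ_t/dt = L(ρ_t) + Tr[J(ρ_t)]ρ_t − J(ρ_t)`. -/
theorem stmt_2 (H₀ C : Matrix (Fin 2) (Fin 2) ℂ) (hH : H₀.IsHermitian)
    (x : ℝ → EuclideanSpace ℂ (Fin 2))
    (η : ℝ → ℂ)
    (hη : ∀ t, η t = star (x t) ⬝ᵥ (Cᴴ * C).mulVec (x t))
    (hode : ∀ t ≥ (0:ℝ), HasDerivAt x
      ((WithLp.toLp 2 (((-Complex.I) • H₀ - (1/2 : ℂ) • (Cᴴ * C) + ((1/2 : ℂ) * η t) • (1 : Matrix (Fin 2) (Fin 2) ℂ)).mulVec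
        (x t)) : EuclideanSpace ℂ (Fin 2))) t)
    (hx0 : ‖x 0‖ = 1)
    (ρ : ℝ → Matrix (Fin 2) (Fin 2) ℂ)
    (hρ : ∀ t, ρ t = vecMulVec (x t) (star (x t))) :
    ∀ t ≥ (0:ℝ), ∀ i j, HasDerivAt (fun s => ρ s i j)
      ((lindblad H₀ C (ρ t) + (jmap C (ρ t)).trace • ρ t - jmap C (ρ t)) i j) t := by
  intro t ht i j
  have hx := hode t ht
  set A := ((-Complex.I) • H₀ - (1/2 : ℂ) • (Cᴴ * C) + ((1/2 : ℂ) * η t) • (1 : Matrix (Fin 2) (Fin 2) ℂ)) with hA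
  have hcomp : ∀ k, HasDerivAt (fun s => x s k) (A.mulVec (x t) k) t := by
    intro k
    have := ((EuclideanSpace.proj k : EuclideanSpace ℂ (Fin 2) →L[ℂ] ℂ).restrictScalars
      ℝ).hasFDerivAt.comp_hasDerivAt t hx
    exact this
  have hmul : HasDerivAt (fun s => x s i * star (x s j))
      (A.mulVec (x t) i * star (x t j) + x t i * star (A.mulVec (x t) j)) t :=
    (hcomp i).mul ((hcomp j).star)
  have hfun : (fun s => ρ s i j) = fun s => x s i * star (x s j) := by
    funext s; rw [hρ s]; rfl
  rw [hfun]
  convert hmul using 1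
  have hH' : ∀ a b : Fin 2, (starRingEnd ℂ) (H₀ a b) = H₀ b a := by
    intro a b
    have := congrFun (congrFun hH b) a
    simpa [Matrix.conjTranspose_apply] using this
  simp only [lindblad, jmap, hρ, hA, hη, Matrix.add_apply, Matrix.sub_apply, Matrix.smul_apply,
    Matrix.mul_apply, Matrix.mulVec, Matrix.trace, Matrix.diag_apply, Matrix.vecMulVec_apply,
    Fin.sum_univ_two, Matrix.conjTranspose_apply, dotProduct, Pi.star_apply,
    smul_eq_mul, Matrix.one_apply, star_add, star_mul', star_sub, RCLike.star_def,
    map_add, _root_.map_mul, map_sub, Complex.conj_conj, _root_.map_one, map_zero]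
  fin_cases i <;> fin_cases j <;>
    simp only [Fin.isValue, if_true, if_false, Fin.mk_one, Fin.mk_zero, one_ne_zero,
      zero_ne_one, reduceIte, hH', Complex.conj_I, map_neg, map_zero, mul_zero, zero_mul,
      map_div₀, _root_.map_one, map_ofNat] <;>
    ring
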